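/- Let r ≥ 2 and n ≥ 1 be integers with (r-1)n ≥ 3, let p ∈ {0, 1, ..., r-1}, and set t = r(r-1)n - 2r - (1-p)(r-1), D = (r-1)(rn+p-1), and μ = D(D-1)···(D-t+1) (the falling factorial of D of length t). Then the t-th derivative of the R-Bonacci polynomial R_{rn+p} satisfies the polynomial identity R_{rn+p}^{(t)}(X) = μ·X^{2r} + (D-r)(D-r-1)···(D-r-t+1)·C_r(rn+p-2, 1)·X^r + t!·C_r(rn+p-3, 2). -/

import Mathlib

noncomputable def RBon (r : ℕ) : ℕ → Polynomial ℂ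
  | 0 => 0
  | 1 => 1
  | n + 2 => ∑ i ∈ (Finset.range r).attach,
      Polynomial.X ^ (i : ℕ) * RBon r (n + 2 - (r - (i : ℕ)))
  decreasing_by
    have h := i.2
    rw [Finset.mem_range] at h
    omega

noncomputable def rnomial (r n j : ℕ) : ℕ :=
  ((∑ i ∈ Finset.range r, (Polynomial.X : Polynomial ℕ) ^ i) ^ n).coeff j

open Polynomial Finset

lemma rnomial_zero (r j : ℕ) : rnomial r 0 j = if j = 0 then 1 else 0 := by
  simp [rnomial, coeff_one]

lemma rnomial_succ (r k m : ℕ) :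
    rnomial r (k + 1) m = ∑ i ∈ range r, if i ≤ m then rnomial r k (m - i) else 0 := by
  unfold rnomial
  rw [pow_succ, Finset.mul_sum, finset_sum_coeff]
  exact Finset.sum_congr rfl fun i _ => coeff_mul_X_pow' _ i m

lemma rnomial_right_zero (r k : ℕ) (hr : 1 ≤ r) : rnomial r k 0 = 1 := by
  induction k with
  | zero => simp [rnomial]
  | succ k ih =>
    rw [rnomial_succ]
    rw [Finset.sum_eq_single 0]
    · simpa using ih
    · intro i _ hi; simp [hi]
    · intro h; exact absurd (Finset.mem_range.2 hr) h

lemma rnomial_eq_zero (r k j : ℕ) (h : (r - 1) * k < j) : rnomial r k j = 0 := by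
  apply Polynomial.coeff_eq_zero_of_natDegree_lt
  calc ((∑ i ∈ Finset.range r, (Polynomial.X : Polynomial ℕ) ^ i) ^ k).natDegree
      ≤ k * (∑ i ∈ Finset.range r, (Polynomial.X : Polynomial ℕ) ^ i).natDegree :=
        natDegree_pow_le
    _ ≤ k * (r - 1) := by
        apply Nat.mul_le_mul_left
        apply natDegree_sum_le_of_forall_le
        intro i hi
        rw [natDegree_X_pow]
        exact Nat.le_sub_one_of_lt (Finset.mem_range.1 hi)
    _ = (r - 1) * k := Nat.mul_comm _ _
    _ < j := h

noncomputable def GG (r N : ℕ) : Polynomial ℂ :=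
  ∑ k ∈ range (N + 1), C (rnomial r k (N - k) : ℂ) * X ^ (r * k)

lemma GG_rec (r n : ℕ) :
    GG r (n + 1) = X ^ r * ∑ i ∈ range r, if i ≤ n then GG r (n - i) else 0 := by
  unfold GG
  rw [Finset.sum_range_succ']
  have h0 : (rnomial r 0 (n + 1 - 0) : ℂ) = 0 := by
    rw [rnomial_zero]; simp
  rw [h0]
  simp only [zero_mul, C_0, add_zero]
  have step : ∀ k ∈ range (n + 1),
      C (rnomial r (k + 1) (n + 1 - (k + 1)) : ℂ) * X ^ (r * (k + 1))
        = ∑ i ∈ range r, (if i ≤ n - k then C (rnomial r k (n - k - i) : ℂ) else 0) * X ^ (r * (k + 1)) := by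
    intro k _
    rw [← Finset.sum_mul]
    congr 1
    rw [Nat.succ_sub_succ, rnomial_succ]
    push_cast [apply_ite (Nat.cast : ℕ → ℂ)]
    rw [map_sum]
    exact Finset.sum_congr rfl fun i _ => by split <;> simp
  rw [Finset.sum_congr rfl step, Finset.sum_comm, Finset.mul_sum]
  apply Finset.sum_congr rfl
  intro i _
  by_cases hi : i ≤ n
  · rw [if_pos hi]
    show _ = X ^ r * ∑ k ∈ range (n - i + 1), C (rnomial r k (n - i - k) : ℂ) * X ^ (r * k)
    rw [Finset.mul_sum]
    rw [← Finset.sum_subset (Finset.range_subset_range.2 (by omega : n - i + 1 ≤ n + 1))]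
    · apply Finset.sum_congr rfl
      intro k hk
      rw [Finset.mem_range] at hk
      rw [if_pos (by omega : i ≤ n - k)]
      have e1 : n - k - i = n - i - k := by omega
      have e2 : r * (k + 1) = r + r * k := by ring
      rw [e1, e2, pow_add]
      ring
    · intro k hk hk'
      rw [Finset.mem_range] at hk hk'
      rw [if_neg (by omega : ¬ i ≤ n - k), zero_mul]
  · rw [if_neg hi, mul_zero]
    apply Finset.sum_eq_zero
    intro k hk
    rw [if_neg (by omega : ¬ i ≤ n - k), zero_mul]

lemma RBon_scaled (r : ℕ) (hr : 2 ≤ r) : ∀ N, RBon r (N + 1) * X ^ N = GG r N := by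
  intro N
  induction N using Nat.strong_induction_on with
  | _ N ih =>
    match N with
    | 0 => simp [RBon, GG, rnomial_right_zero r 0 (by omega)]
    | Nat.succ n =>
      rw [show n + 1 + 1 = n + 2 from rfl, RBon]
      rw [Finset.sum_attach (range r)
        (fun i => Polynomial.X ^ i * RBon r (n + 2 - (r - i)))]
      rw [Finset.sum_mul, GG_rec, Finset.mul_sum]
      rw [← Finset.sum_range_reflect
        (fun i => Polynomial.X ^ i * RBon r (n + 2 - (r - i)) * X ^ (n + 1)) r]
      apply Finset.sum_congr rfl
      intro i hi
      rw [Finset.mem_range] at hi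
      have e1 : r - (r - 1 - i) = i + 1 := by omega
      rw [e1]
      by_cases h : i ≤ n
      · rw [if_pos h]
        have e2 : n + 2 - (i + 1) = (n - i) + 1 := by omega
        rw [e2, ← ih (n - i) (by omega)]
        rw [show (X : Polynomial ℂ) ^ (n + 1) = X ^ (n - i) * X ^ (i + 1) by
          rw [← pow_add]; congr 1; omega]
        rw [show (X : Polynomial ℂ) ^ r = X ^ (r - 1 - i) * X ^ (i + 1) by
          rw [← pow_add]; congr 1; omega]
        ring
      · rw [if_neg h]
        have e2 : n + 2 - (i + 1) = 0 := by omega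
        rw [e2]
        simp [RBon]

lemma RBon_closed (r : ℕ) (hr : 2 ≤ r) (N : ℕ) :
    RBon r (N + 1) = ∑ k ∈ range (N + 1), C (rnomial r k (N - k) : ℂ) * X ^ (r * k - N) := by
  have hX : (X : Polynomial ℂ) ^ N ≠ 0 := pow_ne_zero _ X_ne_zero
  apply mul_right_cancel₀ hX
  rw [RBon_scaled r hr N]
  unfold GG
  rw [Finset.sum_mul]
  apply Finset.sum_congr rfl
  intro k hk
  rw [Finset.mem_range] at hk
  by_cases h : N ≤ r * k
  · rw [mul_assoc, ← pow_add]
    congr 2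
    omega
  · have h0 : rnomial r k (N - k) = 0 := by
      apply rnomial_eq_zero
      have h1 := Nat.sub_one_mul r k
      have h2 : k ≤ r * k := Nat.le_mul_of_pos_left k (by omega)
      omega
    rw [h0]; simp

theorem stmt_10 (r n : ℕ) (hr : 2 ≤ r) (hn : 1 ≤ n) (h3 : 3 ≤ (r - 1) * n)
    (p : ℕ) (hp : p ≤ r - 1)
    (t : ℕ)
    (ht : (t : ℤ) = (r : ℤ) * ((r : ℤ) - 1) * n - 2 * r - (1 - (p : ℤ)) * ((r : ℤ) - 1))
    (D : ℕ) (hD : D = (r - 1) * (r * n + p - 1))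
    (μ : ℕ) (hμ : μ = D.descFactorial t) :
    Polynomial.derivative^[t] (RBon r (r * n + p))
      = Polynomial.C (μ : ℂ) * Polynomial.X ^ (2 * r)
        + Polynomial.C (((D - r).descFactorial t : ℂ) * (rnomial r (r * n + p - 2) 1 : ℂ))
            * Polynomial.X ^ r
        + Polynomial.C ((t.factorial : ℂ) * (rnomial r (r * n + p - 3) 2 : ℂ)) := by
  -- basic arithmetic facts
  have hrn4 : 4 ≤ r * n := by
    have h := Nat.sub_one_mul r n
    omega
  set N : ℕ := r * n + p - 1 with hNdef
  have hN3 : 3 ≤ N := by omega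
  have hNP : r * n + p = N + 1 := by omega
  have hDN : D = (r - 1) * N := by rw [hD]
  -- D in ℤ
  have hDZ : (D : ℤ) = ((r : ℤ) - 1) * ((r : ℤ) * n + p - 1) := by
    rw [hD, hNdef]
    push_cast [Nat.cast_sub (by omega : 1 ≤ r), Nat.cast_sub (by omega : 1 ≤ r * n + p)]
    ring
  have htDZ : (t : ℤ) = (D : ℤ) - 2 * r := by
    rw [ht, hDZ]; ring
  have htD : t = D - 2 * r := by omega
  have hD2r : 2 * r + 1 ≤ D := by
    have h3' : (3 : ℤ) ≤ ((r : ℤ) - 1) * n := by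
      have h : ((3:ℕ) : ℤ) ≤ (((r - 1) * n : ℕ) : ℤ) := Nat.cast_le.2 h3
      rwa [Nat.cast_mul, Nat.cast_sub (by omega : 1 ≤ r), Nat.cast_one] at h
    have hmul : (r : ℤ) * 3 ≤ (r : ℤ) * (((r : ℤ) - 1) * n) :=
      mul_le_mul_of_nonneg_left h3' (by positivity)
    have hp' : (0 : ℤ) ≤ ((r : ℤ) - 1) * p := by
      apply mul_nonneg _ (by positivity)
      have : (2 : ℤ) ≤ r := by exact_mod_cast hr
      linarith
    have : (2 * r + 1 : ℤ) ≤ D := by rw [hDZ]; nlinarith [hmul, hp']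
    exact_mod_cast this
  have ht1 : 1 ≤ t := by omega
  -- product identities for omega
  have e1 : r * (N - 1) + r * 1 = r * N := by
    rw [← Nat.mul_add]; congr 1; omega
  have e2 : r * (N - 2) + r * 2 = r * N := by
    rw [← Nat.mul_add]; congr 1; omega
  have e3 : (r - 1) * N + N = r * N := by
    have := Nat.sub_one_mul r N
    have : N ≤ r * N := Nat.le_mul_of_pos_left N (by omega)
    omega
  rw [hNP, RBon_closed r hr N, Polynomial.iterate_derivative_sum,
    show N + 1 - 2 = N - 1 by omega, show N + 1 - 3 = N - 2 by omega]
  have hterm : ∀ k ∈ range (N + 1),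
      Polynomial.derivative^[t] (C (rnomial r k (N - k) : ℂ) * X ^ (r * k - N))
        = C ((rnomial r k (N - k) : ℂ) * ((r * k - N).descFactorial t : ℂ))
            * X ^ (r * k - N - t) := by
    intro k _
    rw [Polynomial.iterate_derivative_C_mul, Polynomial.iterate_derivative_X_pow_eq_C_mul,
      map_mul, mul_assoc]
  rw [Finset.sum_congr rfl hterm]
  obtain ⟨M, hM⟩ : ∃ M, N = M + 3 := ⟨N - 3, by omega⟩
  rw [show N + 1 = (M + 1) + 1 + 1 + 1 by omega]
  rw [Finset.sum_range_succ, Finset.sum_range_succ, Finset.sum_range_succ]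
  have hzero : ∑ k ∈ range (M + 1),
      C ((rnomial r k (N - k) : ℂ) * ((r * k - N).descFactorial t : ℂ))
        * X ^ (r * k - N - t) = 0 := by
    apply Finset.sum_eq_zero
    intro k hk
    rw [Finset.mem_range] at hk
    have hle : r * k ≤ r * M := Nat.mul_le_mul_left r (by omega)
    have eM : r * M + r * 3 = r * N := by rw [← Nat.mul_add]; congr 1; omega
    have hdesc : (r * k - N).descFactorial t = 0 := by
      rw [Nat.descFactorial_eq_zero_iff_lt]
      omega
    rw [hdesc]
    simp
  rw [hzero, zero_add]
  -- identify the three indices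
  have i1 : M + 1 = N - 2 := by omega
  have i2 : M + 1 + 1 = N - 1 := by omega
  have i3 : M + 1 + 1 + 1 = N := by omega
  rw [i3, i2, i1]
  -- k = N
  have v3a : N - N = 0 := by omega
  have v3b : r * N - N = D := by omega
  have v3c : D - t = 2 * r := by omega
  -- k = N - 1
  have v2a : N - (N - 1) = 1 := by omega
  have v2b : r * (N - 1) - N = D - r := by omega
  have v2c : D - r - t = r := by omega
  -- k = N - 2
  have v1a : N - (N - 2) = 2 := by omega
  have v1b : r * (N - 2) - N = t := by omega
  have v1c : t - t = 0 := by omega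
  rw [v3a, v3b, v3c, v2a, v2b, v2c, v1a, v1b, v1c]
  rw [rnomial_right_zero r N (by omega), Nat.descFactorial_self]
  rw [hμ]
  push_cast
  ring
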